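/- Suppose V is a finite-dimensional (g ⊗ A)^Γ-module that is annihilated by both (g ⊗ I_η)^Γ and (g ⊗ I_{η'})^Γ for finitely supported functions η, η' : X_rat → ℕ with Supp η ∪ Supp η' contained in some element of X_*. Then the (g ⊗ A)-module structures V^η and V^{η'} on V coincide, where V^η is defined via the composition g ⊗ A ↠ (g ⊗ A)/(g ⊗ I_η) ≅ (g ⊗ A)^Γ/(g ⊗ I_η)^Γ → End V. -/

import Mathlib

set_option linter.unusedSectionVars false

open scoped TensorProduct

noncomputable section

/-- The action of a group element on the maximal spectrum of `A`
(so that `m_{γ·x} = comap (γ⁻¹ • ·) m_x`). -/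
def gammaDot (A Γ : Type*) [CommRing A] [Group Γ] [MulSemiringAction Γ A]
    (γ : Γ) (x : MaximalSpectrum A) : MaximalSpectrum A :=
  ⟨Ideal.comap (MulSemiringAction.toRingHom Γ A γ⁻¹) x.asIdeal, by
    have := x.isMaximal
    exact Ideal.comap_isMaximal_of_surjective _ (MulAction.surjective γ⁻¹)⟩

/-- A finite set of points of `X` containing no two (distinct) points in the same
`Γ`-orbit, i.e. an element of `X_*`. -/
def NoTwoInOrbit (A Γ : Type*) [CommRing A] [Group Γ] [MulSemiringAction Γ A]
    (s : Finset (MaximalSpectrum A)) : Prop :=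
  ∀ x ∈ s, ∀ y ∈ s, ∀ γ : Γ, gammaDot A Γ γ x = y → x = y

/-- The ideal `I_η = ∏_{x ∈ Supp η} m_x ^ η x` of `A`. -/
def idealOf {A : Type*} [CommRing A] (η : MaximalSpectrum A →₀ ℕ) : Ideal A :=
  η.support.prod fun x => x.asIdeal ^ η x

variable (k A g Γ : Type*)
variable [Field k] [IsAlgClosed k] [CharZero k]
variable [CommRing A] [Algebra k A] [Algebra.FiniteType k A]
variable [LieRing g] [LieAlgebra k g] [Module.Finite k g] [LieAlgebra.IsSemisimple k g]
variable [CommGroup Γ] [Fintype Γ]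
variable [MulSemiringAction Γ A] [SMulCommClass Γ k A]
variable [DistribMulAction Γ g] [SMulCommClass Γ k g]

/-- The `k`-submodule `g ⊗ I` of `A ⊗[k] g` determined by an ideal `I ⊆ A`. -/
def gT (I : Ideal A) : Submodule k (A ⊗[k] g) :=
  Submodule.span k {z | ∃ f ∈ I, ∃ v : g, z = f ⊗ₜ[k] v}

/-- The diagonal action of `γ ∈ Γ` on `A ⊗[k] g` as a `k`-linear map. -/
def diagMap (γ : Γ) : (A ⊗[k] g) →ₗ[k] A ⊗[k] g :=
  TensorProduct.map (DistribMulAction.toLinearMap k A γ) (DistribMulAction.toLinearMap k g γ)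

/-- The set of `Γ`-fixed points of `A ⊗[k] g`, i.e. the equivariant map algebra
`(g ⊗ A)^Γ`, as a `k`-submodule. -/
def fixedSub : Submodule k (A ⊗[k] g) :=
  ⨅ γ : Γ, LinearMap.ker (diagMap k A g Γ γ - LinearMap.id)

lemma mem_fixedSub {z : A ⊗[k] g} :
    z ∈ fixedSub k A g Γ ↔ ∀ γ : Γ, diagMap k A g Γ γ z = z := by
  simp [fixedSub, sub_eq_zero, LinearMap.sub_apply]

/-- `A ⊗[k] g` is a Lie algebra over `k` (by restriction of scalars from `A`). -/
instance : LieAlgebra k (A ⊗[k] g) where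
  lie_smul t x y := by
    rw [← algebraMap_smul A t y, lie_smul, algebraMap_smul]

lemma diagMap_lie (hbr : ∀ (γ : Γ) (x y : g), γ • ⁅x, y⁆ = ⁅γ • x, γ • y⁆) (γ : Γ)
    (z w : A ⊗[k] g) :
    diagMap k A g Γ γ ⁅z, w⁆ = ⁅diagMap k A g Γ γ z, diagMap k A g Γ γ w⁆ := by
  induction z using TensorProduct.induction_on with
  | zero => simp
  | tmul a v =>
    induction w using TensorProduct.induction_on with
    | zero => simp
    | tmul b u =>
      rw [LieAlgebra.ExtendScalars.bracket_tmul]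
      simp only [diagMap, TensorProduct.map_tmul, DistribSMul.toLinearMap_apply]
      rw [LieAlgebra.ExtendScalars.bracket_tmul]
      change (γ • (a * b)) ⊗ₜ[k] (γ • ⁅v, u⁆) = ((γ • a) * (γ • b)) ⊗ₜ[k] ⁅γ • v, γ • u⁆
      rw [smul_mul', hbr]
    | add w1 w2 h1 h2 => rw [lie_add, map_add, h1, h2, map_add, lie_add]
  | add z1 z2 h1 h2 => rw [add_lie, map_add, h1, h2, map_add, add_lie]

/-- The equivariant map algebra `(g ⊗ A)^Γ` as a Lie subalgebra of `A ⊗[k] g`. -/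
def fixedLie (hbr : ∀ (γ : Γ) (x y : g), γ • ⁅x, y⁆ = ⁅γ • x, γ • y⁆) :
    LieSubalgebra k (A ⊗[k] g) :=
  { fixedSub k A g Γ with
    lie_mem' := by
      intro x y hx hy
      have hx' : x ∈ fixedSub k A g Γ := hx
      have hy' : y ∈ fixedSub k A g Γ := hy
      show ⁅x, y⁆ ∈ fixedSub k A g Γ
      rw [mem_fixedSub] at hx' hy' ⊢
      intro γ
      rw [diagMap_lie k A g Γ hbr, hx' γ, hy' γ] }

/-- `g ⊗ I` as a Lie ideal of `A ⊗[k] g`. -/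
def gTLie (I : Ideal A) : LieIdeal k (A ⊗[k] g) :=
  { gT k A g I with
    lie_mem := by
      intro x m hm
      have hm' : m ∈ gT k A g I := hm
      show ⁅x, m⁆ ∈ gT k A g I
      clear hm
      induction hm' using Submodule.span_induction with
      | mem z hz =>
        obtain ⟨f, hf, v, rfl⟩ := hz
        induction x using TensorProduct.induction_on with
        | zero => rw [zero_lie]; exact (gT k A g I).zero_mem
        | tmul a w =>
          rw [LieAlgebra.ExtendScalars.bracket_tmul]
          exact Submodule.subset_span ⟨a * f, I.mul_mem_left a hf, ⁅w, v⁆, rfl⟩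
        | add x1 x2 h1 h2 => rw [add_lie]; exact (gT k A g I).add_mem h1 h2
      | zero => rw [lie_zero]; exact (gT k A g I).zero_mem
      | add z w _ _ h1 h2 => rw [lie_add]; exact (gT k A g I).add_mem h1 h2
      | smul c z _ h => rw [lie_smul]; exact (gT k A g I).smul_mem c h }

variable {k A g Γ} in
/-- `(g ⊗ I)^Γ` as a Lie ideal of the equivariant map algebra `(g ⊗ A)^Γ`. -/
def fixedIdealOf (hbr : ∀ (γ : Γ) (x y : g), γ • ⁅x, y⁆ = ⁅γ • x, γ • y⁆) (I : Ideal A) :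
    LieIdeal k ↥(fixedLie k A g Γ hbr) where
  carrier := {y | (y : A ⊗[k] g) ∈ gT k A g I}
  add_mem' := fun ha hb => (gT k A g I).add_mem ha hb
  zero_mem' := (gT k A g I).zero_mem
  smul_mem' := fun c y hy => by
    simpa using (gT k A g I).smul_mem c hy
  lie_mem := fun {x m} hm => (gTLie k A g I).lie_mem hm

section Aux

variable {k A g Γ}

lemma gT_mono {I J : Ideal A} (h : I ≤ J) : gT k A g I ≤ gT k A g J :=
  Submodule.span_mono fun z hz => by
    obtain ⟨f, hf, v, rfl⟩ := hz
    exact ⟨f, h hf, v, rfl⟩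

lemma support_le_support_add (η η' : MaximalSpectrum A →₀ ℕ) :
    η.support ⊆ (η + η').support := by
  intro x hx
  rw [Finsupp.mem_support_iff] at hx ⊢
  rw [Finsupp.add_apply]
  omega

lemma support_le_support_add' (η η' : MaximalSpectrum A →₀ ℕ) :
    η'.support ⊆ (η + η').support := by
  intro x hx
  rw [Finsupp.mem_support_iff] at hx ⊢
  rw [Finsupp.add_apply]
  omega

lemma prod_over_superset (η : MaximalSpectrum A →₀ ℕ) {T : Finset (MaximalSpectrum A)}
    (hT : η.support ⊆ T) :
    T.prod (fun x => x.asIdeal ^ η x) = idealOf η := by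
  rw [idealOf]
  exact (Finset.prod_subset hT fun x _ hx => by
    rw [Finsupp.notMem_support_iff.mp hx, pow_zero]).symm

lemma idealOf_add (η η' : MaximalSpectrum A →₀ ℕ) :
    idealOf (η + η') = idealOf η * idealOf η' := by
  rw [idealOf, ← prod_over_superset η (support_le_support_add η η'),
      ← prod_over_superset η' (support_le_support_add' η η'),
      ← Finset.prod_mul_distrib]
  exact Finset.prod_congr rfl fun x _ => by rw [Finsupp.add_apply, pow_add]

lemma maximal_of_idealOf_le (η : MaximalSpectrum A →₀ ℕ) {m : Ideal A} (hm : m.IsPrime)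
    (hne : m ≠ ⊤) (h : idealOf η ≤ m) : ∃ x ∈ η.support, x.asIdeal = m := by
  obtain ⟨x, hx, hle⟩ := hm.prod_le.mp h
  exact ⟨x, hx, x.isMaximal.eq_of_le hne (Ideal.IsPrime.le_of_pow_le hle)⟩

lemma exists_approx_unit
    (hfree : ∀ γ : Γ, γ ≠ 1 → ∀ x : MaximalSpectrum A, gammaDot A Γ γ x ≠ x)
    (ν : MaximalSpectrum A →₀ ℕ) (hsupp : NoTwoInOrbit A Γ ν.support) :
    ∃ e : A, e - 1 ∈ idealOf ν ∧ ∀ γ : Γ, γ ≠ 1 → γ • e ∈ idealOf ν := by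
  classical
  set I := idealOf ν with hI
  have hcop : IsCoprime I
      (∏ γ ∈ Finset.univ.erase (1 : Γ),
        Ideal.comap (MulSemiringAction.toRingHom Γ A γ) I) := by
    refine IsCoprime.prod_right fun γ hγ => ?_
    have hγ1 : γ ≠ 1 := Finset.ne_of_mem_erase hγ
    rw [Ideal.isCoprime_iff_sup_eq]
    by_contra hne
    obtain ⟨m, hmmax, hlem⟩ := Ideal.exists_le_maximal _ hne
    have h1 : I ≤ m := le_trans le_sup_left hlem
    have h2 : Ideal.comap (MulSemiringAction.toRingHom Γ A γ) I ≤ m :=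
      le_trans le_sup_right hlem
    obtain ⟨x', hx'T, hx'⟩ := maximal_of_idealOf_le ν hmmax.isPrime hmmax.ne_top h1
    have h3 : I ≤ Ideal.comap (MulSemiringAction.toRingHom Γ A γ⁻¹) m := by
      intro a ha
      rw [Ideal.mem_comap]
      apply h2
      rw [Ideal.mem_comap, MulSemiringAction.toRingHom_apply,
        MulSemiringAction.toRingHom_apply, smul_inv_smul]
      exact ha
    have hm' : (Ideal.comap (MulSemiringAction.toRingHom Γ A γ⁻¹) m).IsMaximal :=
      Ideal.comap_isMaximal_of_surjective _ (MulAction.surjective γ⁻¹)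
    obtain ⟨x2, hx2T, hx2⟩ := maximal_of_idealOf_le ν hm'.isPrime hm'.ne_top h3
    have hgd : gammaDot A Γ γ x' = x2 := by
      ext : 1
      show Ideal.comap (MulSemiringAction.toRingHom Γ A γ⁻¹) x'.asIdeal = x2.asIdeal
      rw [hx', hx2]
    have hx'x2 : x' = x2 := hsupp x' hx'T x2 hx2T γ hgd
    exact hfree γ hγ1 x' (hx'x2.symm ▸ hgd)
  rw [Ideal.isCoprime_iff_sup_eq] at hcop
  have h1 : (1 : A) ∈ I ⊔ ∏ γ ∈ Finset.univ.erase (1 : Γ),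
      Ideal.comap (MulSemiringAction.toRingHom Γ A γ) I := hcop ▸ Submodule.mem_top
  obtain ⟨i, hi, j, hj, hij⟩ := Submodule.mem_sup.mp h1
  refine ⟨j, ?_, fun γ hγ => ?_⟩
  · have : j - 1 = -i := by rw [← hij]; ring
    rw [this]
    exact neg_mem hi
  · have hle : (∏ γ ∈ Finset.univ.erase (1 : Γ),
        Ideal.comap (MulSemiringAction.toRingHom Γ A γ) I)
        ≤ Ideal.comap (MulSemiringAction.toRingHom Γ A γ) I :=
      le_trans Ideal.prod_le_inf (Finset.inf_le (Finset.mem_erase.mpr ⟨hγ, Finset.mem_univ γ⟩))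
    exact hle hj

lemma diagMap_mul (δ γ : Γ) (z : A ⊗[k] g) :
    diagMap k A g Γ δ (diagMap k A g Γ γ z) = diagMap k A g Γ (δ * γ) z := by
  induction z with
  | zero => simp
  | tmul a v => simp only [diagMap, TensorProduct.map_tmul]; exact congrArg₂ (TensorProduct.tmul k) (mul_smul δ γ a).symm (mul_smul δ γ v).symm
  | add z1 z2 h1 h2 => simp only [map_add, h1, h2]

lemma diagMap_one (z : A ⊗[k] g) : diagMap k A g Γ (1 : Γ) z = z := by
  induction z with
  | zero => simp
  | tmul a v => simp only [diagMap, TensorProduct.map_tmul]; exact congrArg₂ (TensorProduct.tmul k) (one_smul Γ a) (one_smul Γ v)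
  | add z1 z2 h1 h2 => simp only [map_add, h1, h2]

lemma map_mulLeft_mem_gT {I : Ideal A} {e : A} (he : e ∈ I) (z : A ⊗[k] g) :
    TensorProduct.map (LinearMap.mulLeft k e) LinearMap.id z ∈ gT k A g I := by
  induction z with
  | zero => simp only [map_zero]; exact (gT k A g I).zero_mem
  | tmul a v =>
    exact Submodule.subset_span ⟨e * a, I.mul_mem_right a he, v, by
      simp [TensorProduct.map_tmul, LinearMap.mulLeft_apply]⟩
  | add z1 z2 h1 h2 => rw [map_add]; exact add_mem h1 h2

lemma diag_map_mulLeft_mem_gT {I : Ideal A} {e : A} {γ : Γ} (he : γ • e ∈ I) (z : A ⊗[k] g) :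
    diagMap k A g Γ γ (TensorProduct.map (LinearMap.mulLeft k e) LinearMap.id z)
      ∈ gT k A g I := by
  induction z with
  | zero => simp only [map_zero]; exact (gT k A g I).zero_mem
  | tmul a v =>
    refine Submodule.subset_span ⟨γ • e * γ • a, I.mul_mem_right _ he, γ • v, ?_⟩
    simp only [diagMap, TensorProduct.map_tmul, LinearMap.mulLeft_apply, LinearMap.id_apply]
    exact congrArg₂ (TensorProduct.tmul k) (smul_mul' γ e a) rfl
  | add z1 z2 h1 h2 => rw [map_add, map_add]; exact add_mem h1 h2

lemma map_mulLeft_sub_self (e : A) (z : A ⊗[k] g) :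
    TensorProduct.map (LinearMap.mulLeft k e) LinearMap.id z - z
      = TensorProduct.map (LinearMap.mulLeft k (e - 1)) LinearMap.id z := by
  induction z with
  | zero => simp
  | tmul a v =>
    simp only [TensorProduct.map_tmul, LinearMap.mulLeft_apply, LinearMap.id_apply]
    rw [← TensorProduct.sub_tmul, sub_mul, one_mul]
  | add z1 z2 h1 h2 =>
    simp only [map_add]
    rw [← h1, ← h2]
    abel

lemma exists_fixed_approx
    (hfree : ∀ γ : Γ, γ ≠ 1 → ∀ x : MaximalSpectrum A, gammaDot A Γ γ x ≠ x)
    (ν : MaximalSpectrum A →₀ ℕ) (hsupp : NoTwoInOrbit A Γ ν.support)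
    (x : A ⊗[k] g) :
    ∃ z : A ⊗[k] g, z ∈ fixedSub k A g Γ ∧ z - x ∈ gT k A g (idealOf ν) := by
  classical
  obtain ⟨e, he1, he2⟩ := exists_approx_unit hfree ν hsupp
  set w := TensorProduct.map (LinearMap.mulLeft k e) LinearMap.id x with hw
  refine ⟨∑ γ : Γ, diagMap k A g Γ γ w, ?_, ?_⟩
  · rw [mem_fixedSub]
    intro δ
    rw [map_sum]
    calc ∑ γ : Γ, diagMap k A g Γ δ (diagMap k A g Γ γ w)
        = ∑ γ : Γ, diagMap k A g Γ (δ * γ) w :=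
          Finset.sum_congr rfl fun γ _ => diagMap_mul δ γ w
      _ = ∑ γ : Γ, diagMap k A g Γ γ w :=
          Fintype.sum_equiv (Equiv.mulLeft δ) _ _ (fun γ => rfl)
  · have hsplit : (∑ γ : Γ, diagMap k A g Γ γ w) - x
        = (w - x) + ∑ γ ∈ Finset.univ.erase (1 : Γ), diagMap k A g Γ γ w := by
      rw [← Finset.add_sum_erase _ _ (Finset.mem_univ (1 : Γ)), diagMap_one]
      abel
    rw [hsplit]
    refine add_mem ?_ (Submodule.sum_mem _ fun γ hγ =>
      diag_map_mulLeft_mem_gT (he2 γ (Finset.ne_of_mem_erase hγ)) x)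
    rw [hw, map_mulLeft_sub_self]
    exact map_mulLeft_mem_gT he1 x

end Aux

/-- Lemma 2.6 of the paper.  If a finite-dimensional `(g ⊗ A)^Γ`-module `V`
is annihilated by `(g ⊗ I_η)^Γ` and by `(g ⊗ I_{η'})^Γ`, where
`Supp η ∪ Supp η'` is contained in an element of `X_*`, then the `(g ⊗ A)`-module structures
`V^η` and `V^{η'}` coincide.  (The action of `x ∈ g ⊗ A` on `V^η` is `⁅y, v⁆` for any
`y ∈ (g ⊗ A)^Γ` with `y - x ∈ g ⊗ I_η`.) -/
theorem statement6
    (hbr : ∀ (γ : Γ) (x y : g), γ • ⁅x, y⁆ = ⁅γ • x, γ • y⁆)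
    (hfree : ∀ γ : Γ, γ ≠ 1 → ∀ x : MaximalSpectrum A, gammaDot A Γ γ x ≠ x)
    (η η' : MaximalSpectrum A →₀ ℕ)
    (hsupp : NoTwoInOrbit A Γ (η + η').support)
    (V : Type*) [AddCommGroup V] [Module k V]
    [LieRingModule ↥(fixedLie k A g Γ hbr) V] [LieModule k ↥(fixedLie k A g Γ hbr) V]
    [FiniteDimensional k V]
    (hann : ∀ y : ↥(fixedLie k A g Γ hbr), (y : A ⊗[k] g) ∈ gT k A g (idealOf η) →
      ∀ v : V, ⁅y, v⁆ = 0)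
    (hann' : ∀ y : ↥(fixedLie k A g Γ hbr), (y : A ⊗[k] g) ∈ gT k A g (idealOf η') →
      ∀ v : V, ⁅y, v⁆ = 0) :
    ∀ (x : A ⊗[k] g) (y y' : ↥(fixedLie k A g Γ hbr)),
      (y : A ⊗[k] g) - x ∈ gT k A g (idealOf η) →
      (y' : A ⊗[k] g) - x ∈ gT k A g (idealOf η') →
      ∀ v : V, ⁅y, v⁆ = ⁅y', v⁆ := by
  intro x y y' hy hy' v
  obtain ⟨z, hzfix, hzmem⟩ := exists_fixed_approx hfree (η + η') hsupp x
  have hzlie : z ∈ fixedLie k A g Γ hbr := hzfix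
  set y₀ : ↥(fixedLie k A g Γ hbr) := ⟨z, hzlie⟩ with hy₀
  have hIη : idealOf (η + η') ≤ idealOf η := by
    rw [idealOf_add]; exact Ideal.mul_le_left
  have hIη' : idealOf (η + η') ≤ idealOf η' := by
    rw [idealOf_add η η']; exact Ideal.mul_le_right
  have h1 : ⁅y, v⁆ = ⁅y₀, v⁆ := by
    have hmem : ((y - y₀ : ↥(fixedLie k A g Γ hbr)) : A ⊗[k] g) ∈ gT k A g (idealOf η) := by
      have hco : ((y - y₀ : ↥(fixedLie k A g Γ hbr)) : A ⊗[k] g)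
          = ((y : A ⊗[k] g) - x) - (z - x) := by
        push_cast
        abel
      rw [hco]
      exact sub_mem hy (gT_mono hIη hzmem)
    have := hann (y - y₀) hmem v
    rwa [sub_lie, sub_eq_zero] at this
  have h2 : ⁅y', v⁆ = ⁅y₀, v⁆ := by
    have hmem : ((y' - y₀ : ↥(fixedLie k A g Γ hbr)) : A ⊗[k] g) ∈ gT k A g (idealOf η') := by
      have hco : ((y' - y₀ : ↥(fixedLie k A g Γ hbr)) : A ⊗[k] g)
          = ((y' : A ⊗[k] g) - x) - (z - x) := by
        push_cast
        abel
      rw [hco]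
      exact sub_mem hy' (gT_mono hIη' hzmem)
    have := hann' (y' - y₀) hmem v
    rwa [sub_lie, sub_eq_zero] at this
  rw [h1, h2]

end
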